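/- Let (R,m) be a Noetherian local ring, I an ideal of R, and M an R-module such that Supp_R(M) ⊆ V(I), where V(I) = {p ∈ Spec(R) : p ⊇ I}. Then the natural map from D(M) to its I-adic completion, D(M) → inverse limit over l ∈ ℕ of D(M)/I^l·D(M), is an isomorphism. -/

import Mathlib

section aux

variable {R : Type} [CommRing R] {E : Type} [AddCommGroup E] [Module R E]
  {M : Type} [AddCommGroup M] [Module R M]

/-- If `h ∈ J • Hom(M,E)` and `J` kills `x`, then `h x = 0`. -/
lemma stmt6_aux_vanish {J : Ideal R} {h : M →ₗ[R] E}
    (hh : h ∈ (J • ⊤ : Submodule R (M →ₗ[R] E))) {x : M} (hx : ∀ a ∈ J, a • x = 0) :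
    h x = 0 := by
  refine Submodule.smul_induction_on hh ?_ ?_
  · intro a ha g _
    rw [LinearMap.smul_apply, ← map_smul, hx a ha, map_zero]
  · intro f g hf hg
    rw [LinearMap.add_apply, hf, hg, add_zero]

/-- Converse: if `E` is injective, `J` f.g., and `h` vanishes on `M[J]`, then
`h ∈ J • Hom(M,E)`. -/
lemma stmt6_aux_mem [Module.Injective R E] {J : Ideal R} (hJ : J.FG) {h : M →ₗ[R] E}
    (hh : ∀ x : M, (∀ a ∈ J, a • x = 0) → h x = 0) :
    h ∈ (J • ⊤ : Submodule R (M →ₗ[R] E)) := by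
  classical
  obtain ⟨s, hs⟩ := hJ
  set φ : M →ₗ[R] (s → M) := LinearMap.pi (fun i => (i : R) • LinearMap.id) with hφ
  have hφ_apply : ∀ (x : M) (i : s), φ x i = (i : R) • x := fun x i => rfl
  have hker : LinearMap.ker φ ≤ LinearMap.ker h := by
    intro x hx
    simp only [LinearMap.mem_ker] at hx ⊢
    refine hh x ?_
    intro a ha
    rw [← hs] at ha
    refine Submodule.span_induction ?_ ?_ ?_ ?_ ha
    · intro c hc
      have := congrFun hx ⟨c, hc⟩
      simpa [hφ_apply] using this
    · simp
    · intro a b _ _ h1 h2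
      rw [add_smul, h1, h2, add_zero]
    · intro r a _ h1
      rw [smul_eq_mul, mul_smul, h1, smul_zero]
  set ψ0 : (M ⧸ LinearMap.ker φ) →ₗ[R] E := Submodule.liftQ _ h hker with hψ0
  set ψ : LinearMap.range φ →ₗ[R] E :=
    ψ0 ∘ₗ (LinearMap.quotKerEquivRange φ).symm.toLinearMap with hψ
  obtain ⟨Ψ, hΨ⟩ := Module.Injective.out (Submodule.subtype (LinearMap.range φ))
    (Submodule.injective_subtype _) ψ
  have key : ∀ x : M, h x = Ψ (φ x) := by
    intro x
    have h1 : (LinearMap.quotKerEquivRange φ) (Submodule.Quotient.mk x)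
        = ⟨φ x, LinearMap.mem_range_self φ x⟩ := by
      apply Subtype.ext
      simp [LinearMap.quotKerEquivRange]
    have h2 := hΨ ⟨φ x, LinearMap.mem_range_self φ x⟩
    rw [Submodule.subtype_apply] at h2
    rw [h2, hψ, LinearMap.comp_apply, ← h1, LinearEquiv.coe_toLinearMap,
      LinearEquiv.symm_apply_apply, hψ0, Submodule.liftQ_apply]
  have hsum : h = ∑ i : s, (i : R) • (Ψ ∘ₗ LinearMap.single R (fun _ : s => M) i) := by
    ext x
    rw [key x]
    have hx : φ x = ∑ i : s, Pi.single i ((i : R) • x) :=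
      (Finset.univ_sum_single (φ x)).symm
    rw [hx, map_sum, LinearMap.sum_apply]
    refine Finset.sum_congr rfl ?_
    intro i _
    rw [LinearMap.smul_apply, LinearMap.comp_apply, LinearMap.single_apply,
      ← map_smul, ← Pi.single_smul]
  rw [hsum]
  refine Submodule.sum_mem _ ?_
  intro i _
  refine Submodule.smul_mem_smul ?_ Submodule.mem_top
  rw [← hs]
  exact Ideal.subset_span i.2

end aux
section aux2
variable {R : Type} [CommRing R] {M : Type} [AddCommGroup M] [Module R M]

/-- Torsion: if `Supp M ⊆ V(I)` and `R` noetherian, every element is killed by a power of `I`. -/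
lemma stmt6_aux_torsion [IsNoetherianRing R] {I : Ideal R}
    (hsupp : Module.support R M ⊆ PrimeSpectrum.zeroLocus (I : Set R)) (x : M) :
    ∃ l : ℕ, ∀ a ∈ I ^ l, a • x = 0 := by
  set J := (Submodule.span R {x} : Submodule R M).annihilator with hJ
  have hrad : I ≤ J.radical := by
    rw [Ideal.radical_eq_sInf]
    refine le_sInf ?_
    rintro p ⟨hJp, hp⟩
    have hmem : (⟨p, hp⟩ : PrimeSpectrum R) ∈ Module.support R M :=
      Module.mem_support_iff_exists_annihilator.mpr ⟨x, hJp⟩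
    have := hsupp hmem
    rwa [PrimeSpectrum.mem_zeroLocus] at this
  obtain ⟨l, hl⟩ := Ideal.exists_pow_le_of_le_radical_of_fg hrad (IsNoetherian.noetherian I)
  refine ⟨l, fun a ha => ?_⟩
  have : a ∈ J := hl ha
  rwa [hJ, Submodule.mem_annihilator_span_singleton] at this

end aux2

/-- Let `(R, m)` be a noetherian local ring, `E` an injective hull of the
residue field `R/m` and `D = Hom_R(-, E)` the Matlis dual functor.  Let `I` be an ideal
of `R` and `M` an `R`-module with `Supp_R(M) ⊆ V(I)`.  Then the natural map from `D(M)`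
to its `I`-adic completion (the inverse limit over `l ∈ ℕ` of `D(M)/I^l·D(M)`) is an
isomorphism. -/
theorem stmt6 {R : Type} [CommRing R] [IsNoetherianRing R] [IsLocalRing R]
    (E : Type) [AddCommGroup E] [Module R E] [Module.Injective R E]
    (e : IsLocalRing.ResidueField R →ₗ[R] E) (he : Function.Injective e)
    (hess : ∀ N : Submodule R E, N ≠ ⊥ → N ⊓ LinearMap.range e ≠ ⊥)
    (I : Ideal R) (M : Type) [AddCommGroup M] [Module R M]
    (hsupp : Module.support R M ⊆ PrimeSpectrum.zeroLocus (I : Set R)) :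
    Function.Bijective (AdicCompletion.of I (M →ₗ[R] E)) := by
  classical
  choose lx hlx using fun x : M => stmt6_aux_torsion hsupp x
  have mono : ∀ (x : M) {m n : ℕ}, m ≤ n → (∀ a ∈ I ^ m, a • x = 0) →
      ∀ a ∈ I ^ n, a • x = 0 := fun x _ _ hmn hx a ha => hx a (Ideal.pow_le_pow_right hmn ha)
  constructor
  · -- injectivity
    rw [← LinearMap.ker_eq_bot, eq_bot_iff]
    intro f hf
    have hf0 := LinearMap.mem_ker.mp hf
    have hmem : ∀ n : ℕ, f ∈ (I ^ n • ⊤ : Submodule R (M →ₗ[R] E)) := by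
      intro n
      have h1 : (AdicCompletion.of I (M →ₗ[R] E) f).val n = 0 := by rw [hf0]; rfl
      rw [AdicCompletion.of_apply, Submodule.mkQ_apply, Submodule.Quotient.mk_eq_zero] at h1
      exact h1
    simp only [Submodule.mem_bot]
    ext x
    exact stmt6_aux_vanish (hmem (lx x)) (hlx x)
  · -- surjectivity
    intro c
    have hg' : ∀ n : ℕ, ∃ y : M →ₗ[R] E,
        (Submodule.Quotient.mk (p := (I ^ n • ⊤ : Submodule R (M →ₗ[R] E))) y) = c.val n :=
      fun n => Submodule.Quotient.mk_surjective _ _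
    choose g hg using hg'
    have compat : ∀ {m n : ℕ}, m ≤ n →
        g n - g m ∈ (I ^ m • ⊤ : Submodule R (M →ₗ[R] E)) := by
      intro m n hmn
      have h1 := c.property hmn
      rw [← hg n, ← hg m] at h1
      exact (Submodule.Quotient.eq _).mp h1
    have agree : ∀ (x : M) (m n : ℕ), (∀ a ∈ I ^ m, a • x = 0) → (∀ a ∈ I ^ n, a • x = 0) →
        g m x = g n x := by
      have key : ∀ (m n : ℕ), m ≤ n → ∀ x : M, (∀ a ∈ I ^ m, a • x = 0) → g m x = g n x := by
        intro m n hmn x hx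
        have h0 : (g n - g m) x = 0 := stmt6_aux_vanish (compat hmn) hx
        rw [LinearMap.sub_apply, sub_eq_zero] at h0
        exact h0.symm
      intro x m n hm hn
      rcases le_total m n with h | h
      · exact key m n h x hm
      · exact (key n m h x hn).symm
    refine ⟨{ toFun := fun x => g (lx x) x, map_add' := ?_, map_smul' := ?_ }, ?_⟩
    · intro x y
      show g (lx (x + y)) (x + y) = g (lx x) x + g (lx y) y
      set n := max (lx x) (lx y) with hn
      have hx : ∀ a ∈ I ^ n, a • x = 0 := mono x (le_max_left _ _) (hlx x)
      have hy : ∀ a ∈ I ^ n, a • y = 0 := mono y (le_max_right _ _) (hlx y)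
      have hxy : ∀ a ∈ I ^ n, a • (x + y) = 0 := fun a ha => by
        rw [smul_add, hx a ha, hy a ha, add_zero]
      rw [agree (x + y) (lx (x + y)) n (hlx (x + y)) hxy, map_add,
        agree x (lx x) n (hlx x) hx, agree y (lx y) n (hlx y) hy]
    · intro r x
      have hrx : ∀ a ∈ I ^ (lx x), a • (r • x) = 0 := fun a ha => by
        rw [smul_comm, hlx x a ha, smul_zero]
      show g (lx (r • x)) (r • x) = (RingHom.id R) r • g (lx x) x
      rw [RingHom.id_apply, agree (r • x) (lx (r • x)) (lx x) (hlx (r • x)) hrx, map_smul]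
    · ext n
      rw [AdicCompletion.of_apply, Submodule.mkQ_apply, ← hg n]
      rw [Submodule.Quotient.eq]
      refine stmt6_aux_mem (IsNoetherian.noetherian (I ^ n)) ?_
      intro x hx
      rw [LinearMap.sub_apply, sub_eq_zero]
      exact agree x (lx x) n (hlx x) hx
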